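/- arXiv:1112.2769 — 2 statements merged into one kernel-verified Lean document; each statement's English description precedes it below -/
import Mathlib

section
/- In the free monoid on {a, b}, for each n ≥ 1 let Kₙ = {b^(jn) : j ≥ 1}, let L_∞ be the set of nonempty words ending in the letter a, and let Lₙ be the subsemigroup generated by {a, ba, b²a, ..., b^(n−1)a, bⁿ}. Then Lₙ = L_∞ ⊔ Yₙ where Yₙ = {u : u ∈ Kₙ} ∪ {xu : x ∈ L_∞, u ∈ Kₙ}, and this union is disjoint. -/
namespace CuntzWords9

/-- The generator `a` (corresponding to `t₁`). -/
def a : FreeMonoid (Fin 2) := FreeMonoid.of 0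

/-- The generator `b` (corresponding to `t₂`). -/
def b : FreeMonoid (Fin 2) := FreeMonoid.of 1

/-- `L_∞`: the set of nonempty words ending in the letter `a`. -/
def Linf : Set (FreeMonoid (Fin 2)) :=
  {w | (FreeMonoid.toList w).getLast? = some 0}

/-- `Kₙ = {b^(jn) : j ≥ 1}`. -/
def K (n : ℕ) : Set (FreeMonoid (Fin 2)) := {w | ∃ j ≥ 1, w = b ^ (j * n)}

/-- `Lₙ`: the subsemigroup generated by `{a, ba, …, b^(n−1)a, bⁿ}`. -/
def L (n : ℕ) : Subsemigroup (FreeMonoid (Fin 2)) :=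
  Subsemigroup.closure ({x | ∃ k < n, x = b ^ k * a} ∪ {b ^ n})

/-- `Yₙ = Kₙ ∪ {xu : x ∈ L_∞, u ∈ Kₙ}`. -/
def Y (n : ℕ) : Set (FreeMonoid (Fin 2)) :=
  K n ∪ {w | ∃ x ∈ Linf, ∃ u ∈ K n, w = x * u}

lemma toList_b_pow (k : ℕ) : FreeMonoid.toList (b ^ k) = List.replicate k 1 := by
  induction k with
  | zero => rfl
  | succ m ih =>
      rw [pow_succ, FreeMonoid.toList_mul, ih, b, FreeMonoid.toList_of,
        ← List.replicate_succ']

lemma mul_mem_Linf (x : FreeMonoid (Fin 2)) {y : FreeMonoid (Fin 2)} (hy : y ∈ Linf) :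
    x * y ∈ Linf := by
  have hne : FreeMonoid.toList y ≠ [] := by
    intro h
    simp only [Linf, Set.mem_setOf_eq, h, List.getLast?_nil] at hy
    exact Option.some_ne_none _ hy.symm
  simp only [Linf, Set.mem_setOf_eq, FreeMonoid.toList_mul] at hy ⊢
  rw [List.getLast?_append_of_ne_nil _ hne, hy]

lemma lastK {n : ℕ} (hn : 1 ≤ n) {w : FreeMonoid (Fin 2)} (hw : w ∈ K n) :
    (FreeMonoid.toList w).getLast? = some 1 := by
  obtain ⟨j, hj, rfl⟩ := hw
  rw [toList_b_pow]
  obtain ⟨m, hm⟩ : ∃ m, j * n = m + 1 := by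
    refine ⟨j * n - 1, ?_⟩
    have : 1 ≤ j * n := Nat.one_le_iff_ne_zero.2 (Nat.mul_ne_zero (by omega) (by omega))
    omega
  rw [hm, List.replicate_succ', List.getLast?_append_cons]
  simp

lemma lastY {n : ℕ} (hn : 1 ≤ n) {w : FreeMonoid (Fin 2)} (hw : w ∈ Y n) :
    (FreeMonoid.toList w).getLast? = some 1 := by
  rcases hw with hw | ⟨x, _, u, hu, rfl⟩
  · exact lastK hn hw
  · have hne : FreeMonoid.toList u ≠ [] := by
      intro h
      have := lastK hn hu
      rw [h] at this
      simp at this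
    rw [FreeMonoid.toList_mul, List.getLast?_append_of_ne_nil _ hne, lastK hn hu]

lemma bk_a_mem (n : ℕ) (hn : 1 ≤ n) : ∀ k, b ^ k * a ∈ L n := by
  intro k
  induction k using Nat.strong_induction_on with
  | _ k ih =>
    by_cases hk : k < n
    · exact Subsemigroup.subset_closure (Or.inl ⟨k, hk, rfl⟩)
    · push_neg at hk
      have hkey : b ^ k * a = b ^ n * (b ^ (k - n) * a) := by
        rw [← mul_assoc, ← pow_add]
        congr 2
        omega
      rw [hkey]
      exact mul_mem (Subsemigroup.subset_closure (Or.inr rfl)) (ih (k - n) (by omega))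

lemma K_subset_L (n : ℕ) (hn : 1 ≤ n) {w : FreeMonoid (Fin 2)} (hw : w ∈ K n) : w ∈ L n := by
  have hb : b ^ n ∈ L n := Subsemigroup.subset_closure (Or.inr rfl)
  obtain ⟨j, hj, rfl⟩ := hw
  obtain ⟨m, rfl⟩ : ∃ m, j = m + 1 := ⟨j - 1, by omega⟩
  clear hj
  induction m with
  | zero => simpa using hb
  | succ m ih =>
      have h : (m + 1 + 1) * n = n + (m + 1) * n := by ring
      rw [h, pow_add]
      exact mul_mem hb ih

lemma aux_ofList (n : ℕ) (hn : 1 ≤ n) :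
    ∀ l : List (Fin 2), l.getLast? = some 0 → ∀ k, b ^ k * FreeMonoid.ofList l ∈ L n := by
  intro l
  induction l with
  | nil => simp
  | cons x t ih =>
      intro hl k
      have hsplit : FreeMonoid.ofList (x :: t) = FreeMonoid.of x * FreeMonoid.ofList t := rfl
      have hx : x = 0 ∨ x = 1 := by
        rcases x with ⟨x, hx⟩
        interval_cases x
        · exact Or.inl rfl
        · exact Or.inr rfl
      rcases hx with rfl | rfl
      · -- letter a
        rcases t with _ | ⟨y, t'⟩
        · have : FreeMonoid.ofList [(0 : Fin 2)] = a := rfl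
          rw [this]
          exact bk_a_mem n hn k
        · have ht : (y :: t').getLast? = some 0 := by
            rwa [List.getLast?_cons_cons] at hl
          have h1 : b ^ k * FreeMonoid.ofList ((0 : Fin 2) :: y :: t') =
              (b ^ k * a) * FreeMonoid.ofList (y :: t') := by
            rw [mul_assoc]; rfl
          rw [h1]
          have h2 := ih ht 0
          rw [pow_zero, one_mul] at h2
          exact mul_mem (bk_a_mem n hn k) h2
      · -- letter b
        rcases t with _ | ⟨y, t'⟩
        · simp at hl
        · have ht : (y :: t').getLast? = some 0 := by
            rwa [List.getLast?_cons_cons] at hl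
          have h1 : b ^ k * FreeMonoid.ofList ((1 : Fin 2) :: y :: t') =
              b ^ (k + 1) * FreeMonoid.ofList (y :: t') := by
            rw [pow_succ, mul_assoc]; rfl
          rw [h1]
          exact ih ht (k + 1)

lemma Linf_subset_L (n : ℕ) (hn : 1 ≤ n) {w : FreeMonoid (Fin 2)} (hw : w ∈ Linf) : w ∈ L n := by
  have h := aux_ofList n hn (FreeMonoid.toList w) hw 0
  rwa [pow_zero, one_mul, FreeMonoid.ofList_toList] at h

/-- The carrier `Linf ∪ Y n` as a subsemigroup. -/
def S (n : ℕ) (hn : 1 ≤ n) : Subsemigroup (FreeMonoid (Fin 2)) where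
  carrier := Linf ∪ Y n
  mul_mem' := by
    rintro x y hx hy
    rcases hy with hy | hy | ⟨z, hz, u, hu, rfl⟩
    · exact Or.inl (mul_mem_Linf x hy)
    · -- y ∈ K n
      rcases hx with hx | hx | ⟨z, hz, u, hu, rfl⟩
      · exact Or.inr (Or.inr ⟨x, hx, y, hy, rfl⟩)
      · -- x ∈ K n
        obtain ⟨j, hj, rfl⟩ := hx
        obtain ⟨j', hj', rfl⟩ := hy
        refine Or.inr (Or.inl ⟨j + j', by omega, ?_⟩)
        rw [add_mul, pow_add]
      · -- x = z * u
        obtain ⟨j, hj, rfl⟩ := hu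
        obtain ⟨j', hj', rfl⟩ := hy
        refine Or.inr (Or.inr ⟨z, hz, b ^ ((j + j') * n), ⟨j + j', by omega, rfl⟩, ?_⟩)
        rw [add_mul, pow_add, mul_assoc]
    · -- y = z * u with z ∈ Linf, u ∈ K n
      refine Or.inr (Or.inr ⟨x * z, mul_mem_Linf x hz, u, hu, ?_⟩)
      rw [mul_assoc]

/-- `Lₙ = L_∞ ⊔ Yₙ`, a disjoint union. -/
theorem L_eq_Linf_disjUnion_Y (n : ℕ) (hn : 1 ≤ n) :
    (L n : Set (FreeMonoid (Fin 2))) = Linf ∪ Y n ∧ Disjoint Linf (Y n) := by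
  constructor
  · apply Set.Subset.antisymm
    · have hle : L n ≤ S n hn := by
        rw [L, Subsemigroup.closure_le]
        rintro w (⟨k, hk, rfl⟩ | rfl)
        · refine Or.inl ?_
          show (FreeMonoid.toList (b ^ k * a)).getLast? = some 0
          rw [FreeMonoid.toList_mul, toList_b_pow]
          have : FreeMonoid.toList a = [(0 : Fin 2)] := rfl
          rw [this, List.getLast?_append_cons]
          rfl
        · exact Or.inr (Or.inl ⟨1, le_refl 1, by rw [one_mul]⟩)
      exact fun w hw => hle hw
    · rintro w (hw | hw | ⟨z, hz, u, hu, rfl⟩)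
      · exact Linf_subset_L n hn hw
      · exact K_subset_L n hn hw
      · exact mul_mem (Linf_subset_L n hn hz) (K_subset_L n hn hu)
  · rw [Set.disjoint_left]
    intro w hw hwY
    have h1 : (FreeMonoid.toList w).getLast? = some 0 := hw
    have h2 := lastY hn hwY
    rw [h1] at h2
    simp only [Option.some.injEq] at h2
    exact absurd h2 (by decide)

end CuntzWords9
end

section
/- Define, for positive integers n ∣ m with n ≠ m, a monoid homomorphism g_{n,m} from the free monoid on {σ₁,...,σ_{m+1}} to the free monoid on {τ₁,...,τ_{n+1}} by g_{n,m}(σ_{nl+i}) = τ_{n+1}^l τ_i (for 0 ≤ l ≤ m/n − 1, 1 ≤ i ≤ n) and g_{n,m}(σ_{m+1}) = τ_{n+1}^{m/n}, and let g_{n,n} = id. Then for n ∣ m ∣ k one has g_{n,m} ∘ g_{m,k} = g_{n,k} on generators. -/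
namespace CuntzEmbed16

/-- Image of the generator `σ_{j+1}` (0-indexed `j : Fin (m+1)`) of the free
monoid on `m+1` letters under `g_{n,m}`: the last generator `σ_{m+1}` goes to
`τ_{n+1}^{m/n}`, and `σ_{nl+i}` (`0 ≤ l ≤ m/n − 1`, `1 ≤ i ≤ n`) goes to
`τ_{n+1}^l τ_i`. -/
def gGen (n m : ℕ) (hn : 0 < n) (_h : n ∣ m) (j : Fin (m + 1)) :
    FreeMonoid (Fin (n + 1)) :=
  if j.val = m then (FreeMonoid.of ⟨n, Nat.lt_succ_self n⟩) ^ (m / n)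
  else (FreeMonoid.of ⟨n, Nat.lt_succ_self n⟩) ^ (j.val / n) *
    FreeMonoid.of ⟨j.val % n, (Nat.mod_lt _ hn).trans (Nat.lt_succ_self n)⟩

/-- The monoid homomorphism `g_{n,m}` from the free monoid on `m+1`
generators to the free monoid on `n+1` generators (for `n ∣ m`);
for `n = m` it is the identity on generators. -/
def g (n m : ℕ) (hn : 0 < n) (h : n ∣ m) :
    FreeMonoid (Fin (m + 1)) →* FreeMonoid (Fin (n + 1)) :=
  FreeMonoid.lift (gGen n m hn h)

/-- Compatibility of the word-level Cuntz embeddings: for `n ∣ m ∣ k`,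
`g_{n,m} ∘ g_{m,k} = g_{n,k}` on every generator. -/
theorem g_comp (n m k : ℕ) (hn : 0 < n) (hm : 0 < m)
    (h1 : n ∣ m) (h2 : m ∣ k) (j : Fin (k + 1)) :
    g n m hn h1 (g m k hm h2 (FreeMonoid.of j)) =
      g n k hn (h1.trans h2) (FreeMonoid.of j) := by
  obtain ⟨a, rfl⟩ := h1
  obtain ⟨b, rfl⟩ := h2
  have ha : 0 < a := Nat.pos_of_ne_zero (by rintro rfl; simp at hm)
  rw [g, g, g, FreeMonoid.lift_eval_of, FreeMonoid.lift_eval_of]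
  by_cases hj : j.val = n * a * b
  · simp only [gGen, hj, if_true, eq_self_iff_true, map_pow, FreeMonoid.lift_eval_of, ← pow_mul]
    congr 1
    rw [Nat.mul_div_cancel_left _ hm, Nat.mul_div_cancel_left _ hn, mul_assoc,
        Nat.mul_div_cancel_left _ hn]
  · have hjlt : j.val < n * a * b := lt_of_le_of_ne (Nat.lt_succ_iff.mp j.isLt) hj
    have hmod : j.val % (n * a) < n * a := Nat.mod_lt _ hm
    simp only [gGen, if_neg hj, map_mul, map_pow, FreeMonoid.lift_eval_of]
    have e1 : j.val % (n * a) % n = j.val % n := Nat.mod_mod_of_dvd _ (dvd_mul_right n a)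
    have e2 : n * a / n * (j.val / (n * a)) + j.val % (n * a) / n = j.val / n := by
      rw [Nat.mul_div_cancel_left _ hn]
      conv_rhs => rw [← Nat.div_add_mod j.val (n * a), mul_assoc, Nat.mul_add_div hn]
    rw [if_true, if_neg (Nat.ne_of_lt hmod), ← pow_mul, ← mul_assoc, ← pow_add, e2]
    exact congrArg _ (congrArg FreeMonoid.of (Fin.ext e1))
end CuntzEmbed16
end
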